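/- arXiv:1912.00628 — 2 statements merged into one kernel-verified Lean document; each statement's English description precedes it below -/
import Mathlib

section
/- Let φ : [0,2R] → ℝ be C² with φ'' ≤ 0 on (0,R), φ ≡ h on [0,R₁] for some 0 < R₁ < R, and h > 0. Then ∫₀^R r·|W(r)| dr ≥ −R·φ'(R)/√(1+(φ'(R))²) + 2∫₀^R φ'/√(1+(φ')²) dr, where |W(r)| = √((φ''/(1+(φ')²)^{3/2})² + (φ'/(r√(1+(φ')²)))²). -/
open MeasureTheory intervalIntegral

lemma rpow32 {x : ℝ} (hx : 0 < x) : x ^ ((3:ℝ)/2) = x * Real.sqrt x := by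
  rw [show (3:ℝ)/2 = 1 + 1/2 by norm_num, Real.rpow_add hx, Real.rpow_one,
    Real.sqrt_eq_rpow]

lemma sigma_hasDerivAt (t : ℝ) :
    HasDerivAt (fun s : ℝ => s / Real.sqrt (1 + s^2))
      (1 / ((1 + t^2) * Real.sqrt (1 + t^2))) t := by
  have h1 : (0:ℝ) < 1 + t^2 := by positivity
  have hs : 0 < Real.sqrt (1 + t^2) := Real.sqrt_pos.2 h1
  have hq : HasDerivAt (fun s : ℝ => 1 + s^2) (2*t) t := by
    simpa using ((hasDerivAt_pow 2 t).const_add 1)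
  have hu : HasDerivAt (fun s : ℝ => Real.sqrt (1 + s^2))
      (1 / (2 * Real.sqrt (1 + t^2)) * (2*t)) t :=
    (Real.hasDerivAt_sqrt (ne_of_gt h1)).comp t hq
  have hd := (hasDerivAt_id t).div hu (ne_of_gt hs)
  refine hd.congr_deriv ?_
  have hsq : Real.sqrt (1 + t^2) ^ 2 = 1 + t^2 := Real.sq_sqrt h1.le
  simp only [id]
  field_simp
  linear_combination t^2 * hsq

/-- lower bound for `∫₀^R r·|W(r)| dr` for a radially symmetric concave cap. -/
theorem weingarten_integral_lower_bound
    (R R₁ h : ℝ) (hR : 0 < R) (hR₁ : 0 < R₁) (hR₁R : R₁ < R) (hh : 0 < h)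
    (φ : ℝ → ℝ) (hφ : ContDiffOn ℝ 2 φ (Set.Icc 0 (2*R)))
    (hconc : ∀ r ∈ Set.Ioo 0 R, deriv (deriv φ) r ≤ 0)
    (hconst : ∀ r ∈ Set.Icc 0 R₁, φ r = h)
    (hφ'0 : deriv φ 0 = 0)
    (hφ'neg : ∀ r ∈ Set.Ico 0 R, deriv φ r ≤ 0) :
    (∫ r in (0:ℝ)..R,
        r * Real.sqrt ((deriv (deriv φ) r / (1 + (deriv φ r)^2) ^ ((3:ℝ)/2))^2
          + (deriv φ r / (r * Real.sqrt (1 + (deriv φ r)^2)))^2))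
      ≥ -R * deriv φ R / Real.sqrt (1 + (deriv φ R)^2)
        + 2 * ∫ r in (0:ℝ)..R, deriv φ r / Real.sqrt (1 + (deriv φ r)^2) := by
  have h2R : R < 2*R := by linarith
  set c := R₁/2 with hcdef
  have hc0 : 0 < c := by positivity
  have hcR₁ : c < R₁ := by rw [hcdef]; linarith
  have hcR : c < R := lt_trans hcR₁ hR₁R
  -- vanishing of derivatives on the flat part
  have hz1 : ∀ r ∈ Set.Ico 0 R₁, deriv φ r = 0 := by
    intro r hr
    rcases eq_or_lt_of_le hr.1 with h0 | h0
    · rw [← h0]; exact hφ'0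
    · have heq : φ =ᶠ[nhds r] fun _ => h := by
        filter_upwards [Ioo_mem_nhds h0 hr.2] with x hx
        exact hconst x ⟨hx.1.le, hx.2.le⟩
      rw [heq.deriv_eq, deriv_const]
  have hz2 : ∀ r ∈ Set.Ioo 0 R₁, deriv (deriv φ) r = 0 := by
    intro r hr
    have heq : deriv φ =ᶠ[nhds r] fun _ => (0:ℝ) := by
      filter_upwards [Ioo_mem_nhds hr.1 hr.2] with x hx
      exact hz1 x ⟨hx.1.le, hx.2⟩
    rw [heq.deriv_eq, deriv_const]
  -- smoothness on the open interval
  have hC2 : ContDiffOn ℝ 2 φ (Set.Ioo 0 (2*R)) := hφ.mono Set.Ioo_subset_Icc_self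
  have hd1 : ContDiffOn ℝ 1 (deriv φ) (Set.Ioo 0 (2*R)) :=
    hC2.deriv_of_isOpen isOpen_Ioo (by norm_num)
  have hcont1 : ContinuousOn (deriv φ) (Set.Ioo 0 (2*R)) := hd1.continuousOn
  have hcont2 : ContinuousOn (deriv (deriv φ)) (Set.Ioo 0 (2*R)) :=
    (hd1.deriv_of_isOpen (m := 0) isOpen_Ioo (by norm_num)).continuousOn
  have hdiff : ∀ r ∈ Set.Ioo 0 (2*R), HasDerivAt (deriv φ) (deriv (deriv φ) r) r := by
    intro r hr
    exact ((hd1.differentiableOn one_ne_zero).differentiableAt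
      (isOpen_Ioo.mem_nhds hr)).hasDerivAt
  have hden : ∀ r : ℝ, (0:ℝ) < 1 + (deriv φ r)^2 := fun r => by positivity
  have hsqrt : ∀ r : ℝ, (0:ℝ) < Real.sqrt (1 + (deriv φ r)^2) :=
    fun r => Real.sqrt_pos.2 (hden r)
  have hrpow : ∀ r : ℝ, (0:ℝ) < (1 + (deriv φ r)^2) ^ ((3:ℝ)/2) :=
    fun r => Real.rpow_pos_of_pos (hden r) _
  -- derivative of G
  have hGd : ∀ r ∈ Set.Ioo 0 (2*R),
      HasDerivAt (fun s => deriv φ s / Real.sqrt (1 + (deriv φ s)^2))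
        (deriv (deriv φ) r / (1 + (deriv φ r)^2) ^ ((3:ℝ)/2)) r := by
    intro r hr
    have h2 := (sigma_hasDerivAt (deriv φ r)).comp r (hdiff r hr)
    refine h2.congr_deriv ?_
    rw [rpow32 (hden r)]
    ring
  have hUd : ∀ r ∈ Set.Ioo 0 (2*R),
      HasDerivAt (fun s => s * (deriv φ s / Real.sqrt (1 + (deriv φ s)^2)))
        (deriv φ r / Real.sqrt (1 + (deriv φ r)^2)
          + r * (deriv (deriv φ) r / (1 + (deriv φ r)^2) ^ ((3:ℝ)/2))) r := by
    intro r hr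
    have h2 := (hasDerivAt_id r).mul (hGd r hr)
    refine h2.congr_deriv ?_
    simp [id]
  -- continuity on [c, R]
  have hsub : Set.Icc c R ⊆ Set.Ioo 0 (2*R) :=
    fun r hr => ⟨lt_of_lt_of_le hc0 hr.1, lt_of_le_of_lt hr.2 h2R⟩
  have huIcc : Set.uIcc c R = Set.Icc c R := Set.uIcc_of_le hcR.le
  have hcφ' : ContinuousOn (deriv φ) (Set.Icc c R) := hcont1.mono hsub
  have hcφ'' : ContinuousOn (deriv (deriv φ)) (Set.Icc c R) := hcont2.mono hsub
  have hcq : ContinuousOn (fun r => 1 + (deriv φ r)^2) (Set.Icc c R) :=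
    continuousOn_const.add (hcφ'.pow 2)
  have hcs : ContinuousOn (fun r => Real.sqrt (1 + (deriv φ r)^2)) (Set.Icc c R) := hcq.sqrt
  have hcG : ContinuousOn (fun r => deriv φ r / Real.sqrt (1 + (deriv φ r)^2)) (Set.Icc c R) :=
    hcφ'.div hcs (fun r _ => (hsqrt r).ne')
  have hcX : ContinuousOn
      (fun r => deriv (deriv φ) r / (1 + (deriv φ r)^2) ^ ((3:ℝ)/2)) (Set.Icc c R) :=
    hcφ''.div (hcq.rpow_const (fun r _ => Or.inl (hden r).ne')) (fun r _ => (hrpow r).ne')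
  have hcI : ContinuousOn (fun r =>
      r * Real.sqrt ((deriv (deriv φ) r / (1 + (deriv φ r)^2) ^ ((3:ℝ)/2))^2
        + (deriv φ r / (r * Real.sqrt (1 + (deriv φ r)^2)))^2)) (Set.Icc c R) := by
    apply continuousOn_id.mul
    apply ContinuousOn.sqrt
    apply (hcX.pow 2).add
    apply ContinuousOn.pow
    exact hcφ'.div (continuousOn_id.mul hcs)
      (fun r hr => mul_ne_zero (lt_of_lt_of_le hc0 hr.1).ne' (hsqrt r).ne')
  -- integrabilities on [c, R]
  have hintG : IntervalIntegrable
      (fun r => deriv φ r / Real.sqrt (1 + (deriv φ r)^2)) volume c R :=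
    (huIcc ▸ hcG).intervalIntegrable
  have hintrX : IntervalIntegrable
      (fun r => r * (deriv (deriv φ) r / (1 + (deriv φ r)^2) ^ ((3:ℝ)/2))) volume c R :=
    (huIcc ▸ (continuousOn_id.mul hcX)).intervalIntegrable
  have hintnegrX : IntervalIntegrable
      (fun r => -(r * (deriv (deriv φ) r / (1 + (deriv φ r)^2) ^ ((3:ℝ)/2)))) volume c R :=
    hintrX.neg
  have hintI : IntervalIntegrable (fun r =>
      r * Real.sqrt ((deriv (deriv φ) r / (1 + (deriv φ r)^2) ^ ((3:ℝ)/2))^2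
        + (deriv φ r / (r * Real.sqrt (1 + (deriv φ r)^2)))^2)) volume c R :=
    (huIcc ▸ hcI).intervalIntegrable
  -- FTC on [c, R]
  have hintD : IntervalIntegrable (fun r => deriv φ r / Real.sqrt (1 + (deriv φ r)^2)
      + r * (deriv (deriv φ) r / (1 + (deriv φ r)^2) ^ ((3:ℝ)/2))) volume c R :=
    hintG.add hintrX
  have hGc : deriv φ c = 0 := hz1 c ⟨hc0.le, hcR₁⟩
  have hFTC : (∫ r in c..R, (deriv φ r / Real.sqrt (1 + (deriv φ r)^2)
      + r * (deriv (deriv φ) r / (1 + (deriv φ r)^2) ^ ((3:ℝ)/2))))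
      = R * (deriv φ R / Real.sqrt (1 + (deriv φ R)^2)) := by
    rw [integral_eq_sub_of_hasDerivAt (fun r hr => hUd r (hsub (huIcc ▸ hr))) hintD]
    rw [hGc]
    simp
  have hsplitD : (∫ r in c..R, (deriv φ r / Real.sqrt (1 + (deriv φ r)^2)
      + r * (deriv (deriv φ) r / (1 + (deriv φ r)^2) ^ ((3:ℝ)/2))))
      = (∫ r in c..R, deriv φ r / Real.sqrt (1 + (deriv φ r)^2))
        + ∫ r in c..R, r * (deriv (deriv φ) r / (1 + (deriv φ r)^2) ^ ((3:ℝ)/2)) :=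
    integral_add hintG hintrX
  -- pointwise lower bound on [c, R]
  have hmono : (∫ r in c..R, -(r * (deriv (deriv φ) r / (1 + (deriv φ r)^2) ^ ((3:ℝ)/2))))
      ≤ ∫ r in c..R,
          r * Real.sqrt ((deriv (deriv φ) r / (1 + (deriv φ r)^2) ^ ((3:ℝ)/2))^2
            + (deriv φ r / (r * Real.sqrt (1 + (deriv φ r)^2)))^2) := by
    apply integral_mono_on hcR.le hintnegrX hintI
    intro r hr
    have hr0 : 0 ≤ r := (lt_of_lt_of_le hc0 hr.1).le
    set X := deriv (deriv φ) r / (1 + (deriv φ r)^2) ^ ((3:ℝ)/2) with hX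
    set Y := deriv φ r / (r * Real.sqrt (1 + (deriv φ r)^2)) with hY
    have h2 : |X| ≤ Real.sqrt (X^2 + Y^2) := by
      rw [← Real.sqrt_sq_eq_abs]
      exact Real.sqrt_le_sqrt (by nlinarith [sq_nonneg Y])
    calc -(r * X) = r * (-X) := by ring
    _ ≤ r * Real.sqrt (X^2 + Y^2) :=
        mul_le_mul_of_nonneg_left ((neg_le_abs X).trans h2) hr0
  -- vanishing on [0, c]
  have hI0 : Set.EqOn (fun r =>
      r * Real.sqrt ((deriv (deriv φ) r / (1 + (deriv φ r)^2) ^ ((3:ℝ)/2))^2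
        + (deriv φ r / (r * Real.sqrt (1 + (deriv φ r)^2)))^2))
      (fun _ => (0:ℝ)) (Set.uIcc 0 c) := by
    intro r hr
    rw [Set.uIcc_of_le hc0.le] at hr
    rcases eq_or_lt_of_le hr.1 with h0 | h0
    · simp [← h0]
    · have hza := hz1 r ⟨h0.le, lt_of_le_of_lt hr.2 hcR₁⟩
      have hzb := hz2 r ⟨h0, lt_of_le_of_lt hr.2 hcR₁⟩
      simp [hza, hzb]
  have hG0 : Set.EqOn (fun r => deriv φ r / Real.sqrt (1 + (deriv φ r)^2))
      (fun _ => (0:ℝ)) (Set.uIcc 0 c) := by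
    intro r hr
    rw [Set.uIcc_of_le hc0.le] at hr
    simp [hz1 r ⟨hr.1, lt_of_le_of_lt hr.2 hcR₁⟩]
  have hintI0 : IntervalIntegrable (fun r =>
      r * Real.sqrt ((deriv (deriv φ) r / (1 + (deriv φ r)^2) ^ ((3:ℝ)/2))^2
        + (deriv φ r / (r * Real.sqrt (1 + (deriv φ r)^2)))^2)) volume 0 c :=
    (continuousOn_const.congr hI0).intervalIntegrable
  have hintG0 : IntervalIntegrable
      (fun r => deriv φ r / Real.sqrt (1 + (deriv φ r)^2)) volume 0 c :=
    (continuousOn_const.congr hG0).intervalIntegrable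
  have hI0int : (∫ r in (0:ℝ)..c,
      r * Real.sqrt ((deriv (deriv φ) r / (1 + (deriv φ r)^2) ^ ((3:ℝ)/2))^2
        + (deriv φ r / (r * Real.sqrt (1 + (deriv φ r)^2)))^2)) = 0 := by
    rw [integral_congr hI0]; simp
  have hG0int : (∫ r in (0:ℝ)..c, deriv φ r / Real.sqrt (1 + (deriv φ r)^2)) = 0 := by
    rw [integral_congr hG0]; simp
  -- splitting the integrals at c
  have hsplitI : (∫ r in (0:ℝ)..R,
      r * Real.sqrt ((deriv (deriv φ) r / (1 + (deriv φ r)^2) ^ ((3:ℝ)/2))^2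
        + (deriv φ r / (r * Real.sqrt (1 + (deriv φ r)^2)))^2))
      = (∫ r in (0:ℝ)..c,
          r * Real.sqrt ((deriv (deriv φ) r / (1 + (deriv φ r)^2) ^ ((3:ℝ)/2))^2
            + (deriv φ r / (r * Real.sqrt (1 + (deriv φ r)^2)))^2))
        + ∫ r in c..R,
            r * Real.sqrt ((deriv (deriv φ) r / (1 + (deriv φ r)^2) ^ ((3:ℝ)/2))^2
              + (deriv φ r / (r * Real.sqrt (1 + (deriv φ r)^2)))^2) :=
    (integral_add_adjacent_intervals hintI0 hintI).symm
  have hsplitG : (∫ r in (0:ℝ)..R, deriv φ r / Real.sqrt (1 + (deriv φ r)^2))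
      = (∫ r in (0:ℝ)..c, deriv φ r / Real.sqrt (1 + (deriv φ r)^2))
        + ∫ r in c..R, deriv φ r / Real.sqrt (1 + (deriv φ r)^2) :=
    (integral_add_adjacent_intervals hintG0 hintG).symm
  -- negativity of ∫ G
  have hφ'R : deriv φ R ≤ 0 := by
    have hct : ContinuousAt (deriv φ) R := hcont1.continuousAt (isOpen_Ioo.mem_nhds ⟨hR, h2R⟩)
    refine le_of_tendsto (hct.tendsto.mono_left (nhdsWithin_le_nhds (s := Set.Iio R))) ?_
    filter_upwards [Ioo_mem_nhdsLT_of_mem (⟨hR, le_rfl⟩ : R ∈ Set.Ioc 0 R)] with x hx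
    exact hφ'neg x ⟨hx.1.le, hx.2⟩
  have hGneg : (∫ r in c..R, deriv φ r / Real.sqrt (1 + (deriv φ r)^2)) ≤ 0 := by
    have hle : ∀ r ∈ Set.Icc c R, deriv φ r / Real.sqrt (1 + (deriv φ r)^2) ≤ (fun _ => (0:ℝ)) r := by
      intro r hr
      have hd : deriv φ r ≤ 0 := by
        rcases eq_or_lt_of_le hr.2 with hrR | hrR
        · rw [hrR]; exact hφ'R
        · exact hφ'neg r ⟨(lt_of_lt_of_le hc0 hr.1).le, hrR⟩
      exact div_nonpos_of_nonpos_of_nonneg hd (Real.sqrt_nonneg _)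
    have := integral_mono_on hcR.le hintG intervalIntegrable_const hle
    simpa using this
  -- integral of the negated term
  have hnegint : (∫ r in c..R, -(r * (deriv (deriv φ) r / (1 + (deriv φ r)^2) ^ ((3:ℝ)/2))))
      = -(∫ r in c..R, r * (deriv (deriv φ) r / (1 + (deriv φ r)^2) ^ ((3:ℝ)/2))) :=
    integral_neg
  -- final assembly
  have hgoal : -R * deriv φ R / Real.sqrt (1 + (deriv φ R)^2)
      = -(R * (deriv φ R / Real.sqrt (1 + (deriv φ R)^2))) := by ring
  rw [ge_iff_le, hgoal, hsplitI, hsplitG, hI0int, hG0int]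
  have hXval : (∫ r in c..R, r * (deriv (deriv φ) r / (1 + (deriv φ r)^2) ^ ((3:ℝ)/2)))
      = R * (deriv φ R / Real.sqrt (1 + (deriv φ R)^2))
        - ∫ r in c..R, deriv φ r / Real.sqrt (1 + (deriv φ r)^2) := by
    rw [← hFTC, hsplitD]; ring
  linarith [hmono, hnegint, hXval, hGneg]
end

section
/- Let Ω = (−2R,2R)² and let (uₙ) be a sequence of radially symmetric functions in the class S (C², equal to h > 0 on [0,R₁ₙ], equal to 0 on [R₂ₙ,2R], concave on (0,R), convex on (R,2R), with uₙ'(R) < −2h/R) converging pointwise to f = h·χ_{B(0,R)}. If additionally uₙ'(R) → −∞ and ∫₀^R uₙ'/√(1+(uₙ')²) dr → 0 and ∫_R^{2R} uₙ'/√(1+(uₙ')²) dr → 0, then ∫_Ω |W_{uₙ}| dx dy → 4πR, where |W_{uₙ}| is the norm of the Weingarten map of the graph of uₙ. -/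
open Filter MeasureTheory intervalIntegral

lemma sqrt1sq_pos (x : ℝ) : 0 < Real.sqrt (1 + x^2) :=
  Real.sqrt_pos.2 (by positivity)

lemma sqrt1sq_sq (x : ℝ) : Real.sqrt (1 + x^2) ^ 2 = 1 + x^2 :=
  Real.sq_sqrt (by positivity)

lemma rpow_three_halves (x : ℝ) : (1 + x^2) ^ ((3:ℝ)/2) = Real.sqrt (1+x^2) ^ 3 := by
  have h0 : (0:ℝ) ≤ 1 + x^2 := by positivity
  rw [Real.sqrt_eq_rpow, ← Real.rpow_natCast ((1+x^2) ^ ((1:ℝ)/2)) 3, ← Real.rpow_mul h0]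
  norm_num

lemma hasDerivAt_G (x : ℝ) :
    HasDerivAt (fun y : ℝ => y / Real.sqrt (1 + y^2)) (((1+x^2) ^ ((3:ℝ)/2))⁻¹) x := by
  have hpos : (0:ℝ) < 1 + x^2 := by positivity
  set s := Real.sqrt (1 + x^2) with hs
  have hsp : 0 < s := sqrt1sq_pos x
  have hs2 : s ^ 2 = 1 + x^2 := sqrt1sq_sq x
  have h1 : HasDerivAt (fun y : ℝ => 1 + y^2) (2*x) x := by
    simpa using ((hasDerivAt_pow 2 x).const_add 1)
  have h2 : HasDerivAt (fun y : ℝ => Real.sqrt (1 + y^2)) (1/(2*s) * (2*x)) x :=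
    (Real.hasDerivAt_sqrt hpos.ne').comp x h1
  have h3 : HasDerivAt (fun y : ℝ => y / Real.sqrt (1 + y^2))
      ((1 * s - x * (1/(2*s) * (2*x))) / s^2) x :=
    (hasDerivAt_id x).div h2 hsp.ne'
  convert h3 using 1
  rw [rpow_three_halves, ← hs]
  have he : (1 * s - x * (1 / (2 * s) * (2 * x))) / s ^ 2 = (s^2 - x^2) / s^3 := by
    field_simp
  rw [he, hs2, inv_eq_one_div]
  congr 1
  ring

lemma sqrt_add_sq_le (x y : ℝ) : Real.sqrt (x^2 + y^2) ≤ |x| + |y| := by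
  rw [show |x| + |y| = Real.sqrt ((|x|+|y|)^2) from (Real.sqrt_sq (by positivity)).symm]
  apply Real.sqrt_le_sqrt
  nlinarith [abs_nonneg x, abs_nonneg y, sq_abs x, sq_abs y, mul_nonneg (abs_nonneg x) (abs_nonneg y)]

lemma abs_le_sqrt_add_sq (x y : ℝ) : |x| ≤ Real.sqrt (x^2 + y^2) := by
  rw [← Real.sqrt_sq_eq_abs]
  exact Real.sqrt_le_sqrt (by nlinarith [sq_nonneg y])

lemma tendsto_G_atBot :
    Tendsto (fun x : ℝ => x / Real.sqrt (1+x^2)) atBot (nhds (-1)) := by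
  have hsq : Tendsto (fun x : ℝ => x^2) atBot atTop := by
    refine tendsto_atTop_mono' atBot ?_ tendsto_neg_atBot_atTop
    filter_upwards [eventually_le_atBot (-1:ℝ)] with x hx
    nlinarith
  have h1 : Tendsto (fun x : ℝ => 1 + x^2) atBot atTop :=
    tendsto_atTop_add_const_left _ 1 hsq
  have h2 : Tendsto (fun x : ℝ => (1 + x^2)⁻¹) atBot (nhds 0) :=
    tendsto_inv_atTop_zero.comp h1
  have h3 : Tendsto (fun t : ℝ => -Real.sqrt (1 - t)) (nhds 0) (nhds (-1)) := by
    have : Continuous (fun t : ℝ => -Real.sqrt (1 - t)) := by continuity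
    have := this.tendsto 0
    simpa using this
  have h4 := h3.comp h2
  apply h4.congr'
  filter_upwards [eventually_le_atBot (-1:ℝ)] with x hx
  have hxneg : x ≤ 0 := hx.trans (by norm_num)
  have hpos : (0:ℝ) < 1 + x^2 := by positivity
  have hsp := sqrt1sq_pos x
  have hs2 := sqrt1sq_sq x
  show -Real.sqrt (1 - (1+x^2)⁻¹) = x / Real.sqrt (1+x^2)
  have he : 1 - (1+x^2)⁻¹ = x^2 / (1+x^2) := by field_simp; ring
  rw [he, Real.sqrt_div (sq_nonneg x), Real.sqrt_sq_eq_abs, abs_of_nonpos hxneg]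
  ring

lemma phi_up (r x y : ℝ) (hr : 0 < r) :
    r * Real.sqrt (x^2 + (y/r)^2) ≤ r * |x| + |y| := by
  have h := sqrt_add_sq_le x (y/r)
  calc r * Real.sqrt (x^2 + (y/r)^2) ≤ r * (|x| + |y/r|) :=
        mul_le_mul_of_nonneg_left h hr.le
    _ = r*|x| + |y| := by rw [abs_div, abs_of_pos hr]; field_simp

lemma phi_low (r x y : ℝ) (hr : 0 ≤ r) :
    r * |x| ≤ r * Real.sqrt (x^2 + (y/r)^2) :=
  mul_le_mul_of_nonneg_left (abs_le_sqrt_add_sq x (y/r)) hr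

lemma ae_ne_point (c : ℝ) : ∀ᵐ x : ℝ ∂(volume), x ≠ c := by
  rw [MeasureTheory.ae_iff]
  simp only [not_not, Set.setOf_eq_eq_singleton]
  exact measure_singleton _

lemma div_np {a b : ℝ} (ha : a ≤ 0) (hb : 0 ≤ b) : a / b ≤ 0 :=
  div_nonpos_iff.mpr (Or.inr ⟨ha, hb⟩)

/-- g = u'/sqrt(1+u'^2) -/
noncomputable def gg (u : ℝ → ℝ) (r : ℝ) : ℝ := deriv u r / Real.sqrt (1 + (deriv u r)^2)

/-- first curvature -/
noncomputable def DD (u : ℝ → ℝ) (r : ℝ) : ℝ := deriv (deriv u) r / (1 + (deriv u r)^2) ^ ((3:ℝ)/2)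

/-- primitive derivative -/
noncomputable def PP (u : ℝ → ℝ) (r : ℝ) : ℝ := gg u r + r * DD u r

/-- the Weingarten integrand -/
noncomputable def Phi (u : ℝ → ℝ) (r : ℝ) : ℝ :=
  r * Real.sqrt ((DD u r)^2 + (deriv u r / (r * Real.sqrt (1 + (deriv u r)^2)))^2)

lemma key_bounds (R : ℝ) (hR : 0 < R) (u : ℝ → ℝ) (R₁ R₂ c : ℝ)
    (hc : ContDiffOn ℝ 2 u (Set.Icc 0 (2*R)))
    (h1 : 0 < R₁) (h2 : R₁ < R) (h3 : R < R₂) (h4 : R₂ < 2*R)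
    (hu1 : ∀ r ∈ Set.Icc (0:ℝ) R₁, u r = c)
    (hu2 : ∀ r ∈ Set.Icc R₂ (2*R), u r = 0)
    (hcc : ∀ r ∈ Set.Ioo (0:ℝ) R, deriv (deriv u) r ≤ 0)
    (hcv : ∀ r ∈ Set.Ioo R (2*R), 0 ≤ deriv (deriv u) r) :
    (-2*R*(deriv u R / Real.sqrt (1 + (deriv u R)^2))
      + (∫ r in (0:ℝ)..R, deriv u r / Real.sqrt (1 + (deriv u r)^2))
      - (∫ r in R..(2*R), deriv u r / Real.sqrt (1 + (deriv u r)^2))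
      ≤ ∫ r in (0:ℝ)..(2*R), r * Real.sqrt ((deriv (deriv u) r / (1 + (deriv u r)^2) ^ ((3:ℝ)/2))^2
          + (deriv u r / (r * Real.sqrt (1 + (deriv u r)^2)))^2)) ∧
    ((∫ r in (0:ℝ)..(2*R), r * Real.sqrt ((deriv (deriv u) r / (1 + (deriv u r)^2) ^ ((3:ℝ)/2))^2
          + (deriv u r / (r * Real.sqrt (1 + (deriv u r)^2)))^2))
      ≤ -2*R*(deriv u R / Real.sqrt (1 + (deriv u R)^2))
        - 2*(∫ r in R..(2*R), deriv u r / Real.sqrt (1 + (deriv u r)^2))) := by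
  show (-2*R*(gg u R) + (∫ r in (0:ℝ)..R, gg u r) - (∫ r in R..(2*R), gg u r)
      ≤ ∫ r in (0:ℝ)..(2*R), Phi u r) ∧
    ((∫ r in (0:ℝ)..(2*R), Phi u r) ≤ -2*R*(gg u R) - 2*(∫ r in R..(2*R), gg u r))
  have hO : IsOpen (Set.Ioo (0:ℝ) (2*R)) := isOpen_Ioo
  have hcO : ContDiffOn ℝ 2 u (Set.Ioo 0 (2*R)) := hc.mono Set.Ioo_subset_Icc_self
  have hvO : ContDiffOn ℝ 1 (deriv u) (Set.Ioo 0 (2*R)) :=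
    hcO.deriv_of_isOpen hO (by norm_num)
  have hvc : ContinuousOn (deriv u) (Set.Ioo 0 (2*R)) := hvO.continuousOn
  have hac : ContinuousOn (deriv (deriv u)) (Set.Ioo 0 (2*R)) :=
    hvO.continuousOn_deriv_of_isOpen hO le_rfl
  have hvd : ∀ r ∈ Set.Ioo (0:ℝ) (2*R), HasDerivAt (deriv u) (deriv (deriv u) r) r := fun r hr =>
    ((hvO.differentiableOn one_ne_zero) r hr).differentiableAt (hO.mem_nhds hr) |>.hasDerivAt
  have hv0L : ∀ r ∈ Set.Ioo (0:ℝ) R₁, deriv u r = 0 := by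
    intro r hr
    have hev : u =ᶠ[nhds r] (fun _ => c) := by
      filter_upwards [isOpen_Ioo.mem_nhds hr] with x hx
      exact hu1 x ⟨hx.1.le, hx.2.le⟩
    rw [hev.deriv_eq]; exact deriv_const r c
  have hv0R : ∀ r ∈ Set.Ioo R₂ (2*R), deriv u r = 0 := by
    intro r hr
    have hev : u =ᶠ[nhds r] (fun _ => 0) := by
      filter_upwards [isOpen_Ioo.mem_nhds hr] with x hx
      exact hu2 x ⟨hx.1.le, hx.2.le⟩
    rw [hev.deriv_eq]; exact deriv_const r 0
  have ha0L : ∀ r ∈ Set.Ioo (0:ℝ) R₁, deriv (deriv u) r = 0 := by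
    intro r hr
    have hev : deriv u =ᶠ[nhds r] (fun _ => 0) := by
      filter_upwards [isOpen_Ioo.mem_nhds hr] with x hx using hv0L x hx
    rw [hev.deriv_eq]; exact deriv_const r 0
  have ha0R : ∀ r ∈ Set.Ioo R₂ (2*R), deriv (deriv u) r = 0 := by
    intro r hr
    have hev : deriv u =ᶠ[nhds r] (fun _ => 0) := by
      filter_upwards [isOpen_Ioo.mem_nhds hr] with x hx using hv0R x hx
    rw [hev.deriv_eq]; exact deriv_const r 0
  set δ := R₁/2 with hδdef
  set η := (R₂ + 2*R)/2 with hηdef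
  have hδ0 : 0 < δ := half_pos h1
  have hδ1 : δ < R₁ := half_lt_self h1
  have hδR : δ < R := hδ1.trans h2
  have hη1 : R₂ < η := by rw [hηdef]; linarith
  have hη2 : η < 2*R := by rw [hηdef]; linarith
  have hRη : R < η := h3.trans hη1
  have hsub1 : Set.Icc δ R ⊆ Set.Ioo 0 (2*R) := fun x hx =>
    ⟨hδ0.trans_le hx.1, lt_of_le_of_lt hx.2 (by linarith)⟩
  have hsub2 : Set.Icc R η ⊆ Set.Ioo 0 (2*R) := fun x hx =>
    ⟨hR.trans_le hx.1, lt_of_le_of_lt hx.2 hη2⟩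
  have hsubδη : Set.Icc δ η ⊆ Set.Ioo 0 (2*R) := fun x hx =>
    ⟨hδ0.trans_le hx.1, lt_of_le_of_lt hx.2 hη2⟩
  have hvneg1 : ∀ r ∈ Set.Icc δ R, deriv u r ≤ 0 := by
    have hanti : AntitoneOn (deriv u) (Set.Icc δ R) := by
      apply antitoneOn_of_deriv_nonpos (convex_Icc δ R) (hvc.mono hsub1)
      · refine (hvO.differentiableOn one_ne_zero).mono ?_
        rw [interior_Icc]
        exact fun x hx => hsub1 ⟨hx.1.le, hx.2.le⟩
      · intro x hx
        rw [interior_Icc] at hx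
        exact hcc x ⟨hδ0.trans hx.1, hx.2⟩
    intro r hr
    calc deriv u r ≤ deriv u δ := hanti (Set.left_mem_Icc.2 hδR.le) hr hr.1
    _ = 0 := hv0L δ ⟨hδ0, hδ1⟩
  have hvneg2 : ∀ r ∈ Set.Icc R η, deriv u r ≤ 0 := by
    have hmono : MonotoneOn (deriv u) (Set.Icc R η) := by
      apply monotoneOn_of_deriv_nonneg (convex_Icc R η) (hvc.mono hsub2)
      · refine (hvO.differentiableOn one_ne_zero).mono ?_
        rw [interior_Icc]
        exact fun x hx => hsub2 ⟨hx.1.le, hx.2.le⟩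
      · intro x hx
        rw [interior_Icc] at hx
        exact hcv x ⟨hx.1, hx.2.trans hη2⟩
    intro r hr
    calc deriv u r ≤ deriv u η := hmono hr (Set.right_mem_Icc.2 hRη.le) hr.2
    _ = 0 := hv0R η ⟨hη1, hη2⟩
  have hgd : ∀ r ∈ Set.Ioo (0:ℝ) (2*R), HasDerivAt (gg u) (DD u r) r := by
    intro r hr
    have h := (hasDerivAt_G (deriv u r)).comp r (hvd r hr)
    have h2 : HasDerivAt (gg u)
        (((1 + (deriv u r)^2) ^ ((3:ℝ)/2))⁻¹ * deriv (deriv u) r) r := h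
    simpa [DD, div_eq_inv_mul] using h2
  have hPd : ∀ r ∈ Set.Ioo (0:ℝ) (2*R), HasDerivAt (fun x => x * gg u x) (PP u r) r := by
    intro r hr
    have h := (hasDerivAt_id' r).fun_mul (hgd r hr)
    simpa [PP] using h
  have hscont : ContinuousOn (fun r => Real.sqrt (1 + (deriv u r)^2)) (Set.Ioo 0 (2*R)) :=
    (continuousOn_const.add (hvc.pow 2)).sqrt
  have hgc : ContinuousOn (gg u) (Set.Ioo 0 (2*R)) :=
    hvc.div hscont (fun r _ => (sqrt1sq_pos _).ne')
  have hpowc : ContinuousOn (fun r => (1 + (deriv u r)^2) ^ ((3:ℝ)/2)) (Set.Ioo 0 (2*R)) :=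
    (continuousOn_const.add (hvc.pow 2)).rpow_const (fun r _ => Or.inr (by norm_num))
  have hDcont : ContinuousOn (DD u) (Set.Ioo 0 (2*R)) :=
    hac.div hpowc (fun r _ => (Real.rpow_pos_of_pos (by positivity) _).ne')
  have hPc : ContinuousOn (PP u) (Set.Ioo 0 (2*R)) :=
    hgc.add (continuousOn_id.mul hDcont)
  have hΦc : ContinuousOn (Phi u) (Set.Icc δ η) := by
    show ContinuousOn (fun r => r * Real.sqrt ((DD u r)^2 +
      (deriv u r / (r * Real.sqrt (1 + (deriv u r)^2)))^2)) (Set.Icc δ η)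
    apply ContinuousOn.mul continuousOn_id
    apply ContinuousOn.sqrt
    apply ContinuousOn.add ((hDcont.mono hsubδη).pow 2)
    apply ContinuousOn.pow
    apply (hvc.mono hsubδη).div (continuousOn_id.mul (hscont.mono hsubδη))
    intro r hr
    have h0r : 0 < r := hδ0.trans_le hr.1
    exact (mul_pos h0r (sqrt1sq_pos _)).ne'
  have huIccδη : Set.uIcc δ η = Set.Icc δ η := Set.uIcc_of_le (hδR.le.trans hRη.le)
  have hΦint2 : IntervalIntegrable (Phi u) volume δ η :=
    ContinuousOn.intervalIntegrable (by rw [huIccδη]; exact hΦc)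
  have hδRint : IntervalIntegrable (Phi u) volume δ R := hΦint2.mono_set (by
    rw [Set.uIcc_of_le hδR.le, huIccδη]; exact Set.Icc_subset_Icc le_rfl hRη.le)
  have hRηint : IntervalIntegrable (Phi u) volume R η := hΦint2.mono_set (by
    rw [Set.uIcc_of_le hRη.le, huIccδη]; exact Set.Icc_subset_Icc hδR.le le_rfl)
  have hΦzero : ∀ r ∈ Set.Ioc (0:ℝ) δ, Phi u r = 0 := by
    intro r hr
    have hr' : r ∈ Set.Ioo (0:ℝ) R₁ := ⟨hr.1, lt_of_le_of_lt hr.2 hδ1⟩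
    simp [Phi, DD, hv0L r hr', ha0L r hr']
  have hΦzero' : ∀ r ∈ Set.Ico η (2*R), Phi u r = 0 := by
    intro r hr
    have hr' : r ∈ Set.Ioo R₂ (2*R) := ⟨hη1.trans_le hr.1, hr.2⟩
    simp [Phi, DD, hv0R r hr', ha0R r hr']
  have hΦintL : IntervalIntegrable (Phi u) volume 0 δ := by
    rw [intervalIntegrable_iff, Set.uIoc_of_le hδ0.le]
    exact (integrableOn_congr_fun (fun r hr => hΦzero r hr) measurableSet_Ioc).2 integrableOn_zero
  have hΦintR : IntervalIntegrable (Phi u) volume η (2*R) := by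
    rw [intervalIntegrable_iff, Set.uIoc_of_le hη2.le]
    have hae : (fun _ => (0:ℝ)) =ᵐ[volume.restrict (Set.Ioc η (2*R))] Phi u := by
      filter_upwards [MeasureTheory.ae_restrict_mem measurableSet_Ioc,
        MeasureTheory.ae_restrict_of_ae (ae_ne_point (2*R))] with x hx hne
      exact (hΦzero' x ⟨hx.1.le, lt_of_le_of_ne hx.2 hne⟩).symm
    exact (MeasureTheory.integrable_zero _ _ _).congr hae
  have hΦzint1 : (∫ r in (0:ℝ)..δ, Phi u r) = 0 := by
    have he : (∫ r in (0:ℝ)..δ, Phi u r) = ∫ _ in (0:ℝ)..δ, (0:ℝ) := by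
      apply intervalIntegral.integral_congr_ae
      apply MeasureTheory.ae_of_all
      intro x hx
      rw [Set.uIoc_of_le hδ0.le] at hx
      exact hΦzero x hx
    simpa using he
  have hΦzint2 : (∫ r in η..(2*R), Phi u r) = 0 := by
    have he : (∫ r in η..(2*R), Phi u r) = ∫ _ in η..(2*R), (0:ℝ) := by
      apply intervalIntegral.integral_congr_ae
      filter_upwards [ae_ne_point (2*R)] with x hne hx
      rw [Set.uIoc_of_le hη2.le] at hx
      exact hΦzero' x ⟨hx.1.le, lt_of_le_of_ne hx.2 hne⟩
    simpa using he
  have hsplit : (∫ r in (0:ℝ)..(2*R), Phi u r)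
      = (∫ r in δ..R, Phi u r) + (∫ r in R..η, Phi u r) := by
    have e1 := intervalIntegral.integral_add_adjacent_intervals hΦintL hδRint
    have e2 := intervalIntegral.integral_add_adjacent_intervals (hΦintL.trans hδRint) hRηint
    have e3 := intervalIntegral.integral_add_adjacent_intervals
      ((hΦintL.trans hδRint).trans hRηint) hΦintR
    rw [← e3, ← e2, ← e1, hΦzint1, hΦzint2]; ring
  have huIcc1 : Set.uIcc δ R ⊆ Set.Ioo 0 (2*R) := by rw [Set.uIcc_of_le hδR.le]; exact hsub1
  have huIcc2 : Set.uIcc R η ⊆ Set.Ioo 0 (2*R) := by rw [Set.uIcc_of_le hRη.le]; exact hsub2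
  have hPint1 : IntervalIntegrable (PP u) volume δ R := (hPc.mono huIcc1).intervalIntegrable
  have hPint2 : IntervalIntegrable (PP u) volume R η := (hPc.mono huIcc2).intervalIntegrable
  have hgint1 : IntervalIntegrable (gg u) volume δ R := (hgc.mono huIcc1).intervalIntegrable
  have hgint2 : IntervalIntegrable (gg u) volume R η := (hgc.mono huIcc2).intervalIntegrable
  have hgδ : gg u δ = 0 := by simp [gg, hv0L δ ⟨hδ0, hδ1⟩]
  have hgη : gg u η = 0 := by simp [gg, hv0R η ⟨hη1, hη2⟩]
  have hftc1 : (∫ r in δ..R, PP u r) = R * gg u R := by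
    have he := intervalIntegral.integral_eq_sub_of_hasDerivAt (f := fun x => x * gg u x)
      (fun r hr => hPd r (huIcc1 hr)) hPint1
    rw [he]; simp [hgδ]
  have hftc2 : (∫ r in R..η, PP u r) = -(R * gg u R) := by
    have he := intervalIntegral.integral_eq_sub_of_hasDerivAt (f := fun x => x * gg u x)
      (fun r hr => hPd r (huIcc2 hr)) hPint2
    rw [he]; simp [hgη]
  have hgintL : IntervalIntegrable (gg u) volume 0 δ := by
    rw [intervalIntegrable_iff, Set.uIoc_of_le hδ0.le]
    refine (integrableOn_congr_fun (fun r hr => ?_) measurableSet_Ioc).2 integrableOn_zero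
    simp [gg, hv0L r ⟨hr.1, lt_of_le_of_lt hr.2 hδ1⟩]
  have hgzero1 : (∫ r in (0:ℝ)..δ, gg u r) = 0 := by
    have he : (∫ r in (0:ℝ)..δ, gg u r) = ∫ _ in (0:ℝ)..δ, (0:ℝ) := by
      apply intervalIntegral.integral_congr_ae
      apply MeasureTheory.ae_of_all
      intro x hx
      rw [Set.uIoc_of_le hδ0.le] at hx
      simp [gg, hv0L x ⟨hx.1, lt_of_le_of_lt hx.2 hδ1⟩]
    simpa using he
  have hB : (∫ r in (0:ℝ)..R, gg u r) = ∫ r in δ..R, gg u r := by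
    rw [← intervalIntegral.integral_add_adjacent_intervals hgintL hgint1, hgzero1, zero_add]
  have hgintR : IntervalIntegrable (gg u) volume η (2*R) := by
    rw [intervalIntegrable_iff, Set.uIoc_of_le hη2.le]
    have hae : (fun _ => (0:ℝ)) =ᵐ[volume.restrict (Set.Ioc η (2*R))] gg u := by
      filter_upwards [MeasureTheory.ae_restrict_mem measurableSet_Ioc,
        MeasureTheory.ae_restrict_of_ae (ae_ne_point (2*R))] with x hx hne
      simp [gg, hv0R x ⟨hη1.trans hx.1, lt_of_le_of_ne hx.2 hne⟩]
    exact (MeasureTheory.integrable_zero _ _ _).congr hae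
  have hgzero2 : (∫ r in η..(2*R), gg u r) = 0 := by
    have he : (∫ r in η..(2*R), gg u r) = ∫ _ in η..(2*R), (0:ℝ) := by
      apply intervalIntegral.integral_congr_ae
      filter_upwards [ae_ne_point (2*R)] with x hne hx
      rw [Set.uIoc_of_le hη2.le] at hx
      simp [gg, hv0R x ⟨hη1.trans hx.1, lt_of_le_of_ne hx.2 hne⟩]
    simpa using he
  have hC : (∫ r in R..(2*R), gg u r) = ∫ r in R..η, gg u r := by
    rw [← intervalIntegral.integral_add_adjacent_intervals hgint2 hgintR, hgzero2, add_zero]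
  have hPhi_eq : ∀ r : ℝ, 0 < r → Phi u r = r * Real.sqrt ((DD u r)^2 + (gg u r / r)^2) := by
    intro r hr
    show r * Real.sqrt ((DD u r)^2 + (deriv u r / (r * Real.sqrt (1 + (deriv u r)^2)))^2)
      = r * Real.sqrt ((DD u r)^2 + (gg u r / r)^2)
    have he : deriv u r / (r * Real.sqrt (1 + (deriv u r)^2)) = gg u r / r := by
      show _ = deriv u r / Real.sqrt (1 + (deriv u r)^2) / r
      rw [div_div, mul_comm]
    rw [he]
  have hlow1 : (∫ r in δ..R, (gg u r - PP u r)) ≤ ∫ r in δ..R, Phi u r := by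
    apply intervalIntegral.integral_mono_ae_restrict hδR.le (hgint1.sub hPint1) hδRint
    filter_upwards [MeasureTheory.ae_restrict_mem measurableSet_Icc,
      MeasureTheory.ae_restrict_of_ae (ae_ne_point R)] with r hr hne
    have hrR : r < R := lt_of_le_of_ne hr.2 hne
    have hr0 : 0 < r := hδ0.trans_le hr.1
    have hD0 : DD u r ≤ 0 :=
      div_np (hcc r ⟨hr0, hrR⟩) (Real.rpow_pos_of_pos (by positivity) _).le
    calc gg u r - PP u r = r * (-DD u r) := by show gg u r - (gg u r + r * DD u r) = _; ring
      _ ≤ r * |DD u r| := mul_le_mul_of_nonneg_left (neg_le_abs _) hr0.le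
      _ ≤ r * Real.sqrt ((DD u r)^2 + (gg u r / r)^2) := phi_low r _ _ hr0.le
      _ = Phi u r := (hPhi_eq r hr0).symm
  have hup1 : (∫ r in δ..R, Phi u r) ≤ ∫ r in δ..R, -PP u r := by
    apply intervalIntegral.integral_mono_ae_restrict hδR.le hδRint hPint1.neg
    filter_upwards [MeasureTheory.ae_restrict_mem measurableSet_Icc,
      MeasureTheory.ae_restrict_of_ae (ae_ne_point R)] with r hr hne
    have hrR : r < R := lt_of_le_of_ne hr.2 hne
    have hr0 : 0 < r := hδ0.trans_le hr.1
    have hD0 : DD u r ≤ 0 :=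
      div_np (hcc r ⟨hr0, hrR⟩) (Real.rpow_pos_of_pos (by positivity) _).le
    have hg0 : gg u r ≤ 0 := div_np (hvneg1 r hr) (Real.sqrt_nonneg _)
    calc Phi u r = r * Real.sqrt ((DD u r)^2 + (gg u r / r)^2) := hPhi_eq r hr0
      _ ≤ r * |DD u r| + |gg u r| := phi_up r _ _ hr0
      _ = -PP u r := by
          rw [abs_of_nonpos hD0, abs_of_nonpos hg0]
          show _ = -(gg u r + r * DD u r); ring
  have hlow2 : (∫ r in R..η, (PP u r - gg u r)) ≤ ∫ r in R..η, Phi u r := by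
    apply intervalIntegral.integral_mono_ae_restrict hRη.le (hPint2.sub hgint2) hRηint
    filter_upwards [MeasureTheory.ae_restrict_mem measurableSet_Icc,
      MeasureTheory.ae_restrict_of_ae (ae_ne_point R)] with r hr hne
    have hrR : R < r := lt_of_le_of_ne hr.1 (Ne.symm hne)
    have hr0 : 0 < r := hR.trans hrR
    have hD0 : 0 ≤ DD u r :=
      div_nonneg (hcv r ⟨hrR, lt_of_le_of_lt hr.2 hη2⟩) (Real.rpow_pos_of_pos (by positivity) _).le
    calc PP u r - gg u r = r * DD u r := by show (gg u r + r * DD u r) - gg u r = _; ring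
      _ ≤ r * |DD u r| := mul_le_mul_of_nonneg_left (le_abs_self _) hr0.le
      _ ≤ r * Real.sqrt ((DD u r)^2 + (gg u r / r)^2) := phi_low r _ _ hr0.le
      _ = Phi u r := (hPhi_eq r hr0).symm
  have hup2 : (∫ r in R..η, Phi u r) ≤ ∫ r in R..η, (PP u r - 2*gg u r) := by
    apply intervalIntegral.integral_mono_ae_restrict hRη.le hRηint (hPint2.sub (hgint2.const_mul 2))
    filter_upwards [MeasureTheory.ae_restrict_mem measurableSet_Icc,
      MeasureTheory.ae_restrict_of_ae (ae_ne_point R)] with r hr hne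
    have hrR : R < r := lt_of_le_of_ne hr.1 (Ne.symm hne)
    have hr0 : 0 < r := hR.trans hrR
    have hD0 : 0 ≤ DD u r :=
      div_nonneg (hcv r ⟨hrR, lt_of_le_of_lt hr.2 hη2⟩) (Real.rpow_pos_of_pos (by positivity) _).le
    have hg0 : gg u r ≤ 0 := div_np (hvneg2 r hr) (Real.sqrt_nonneg _)
    calc Phi u r = r * Real.sqrt ((DD u r)^2 + (gg u r / r)^2) := hPhi_eq r hr0
      _ ≤ r * |DD u r| + |gg u r| := phi_up r _ _ hr0
      _ = PP u r - 2*gg u r := by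
          rw [abs_of_nonneg hD0, abs_of_nonpos hg0]
          show _ = (gg u r + r * DD u r) - 2*gg u r; ring
  have hi1 : (∫ r in δ..R, (gg u r - PP u r)) = -(R * gg u R) + ∫ r in δ..R, gg u r := by
    rw [intervalIntegral.integral_sub hgint1 hPint1, hftc1]; ring
  have hi2 : (∫ r in δ..R, -PP u r) = -(R * gg u R) := by
    rw [intervalIntegral.integral_neg, hftc1]
  have hi3 : (∫ r in R..η, (PP u r - gg u r)) = -(R * gg u R) - ∫ r in R..η, gg u r := by
    rw [intervalIntegral.integral_sub hPint2 hgint2, hftc2]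
  have hi4 : (∫ r in R..η, (PP u r - 2*gg u r)) = -(R * gg u R) - 2*∫ r in R..η, gg u r := by
    rw [intervalIntegral.integral_sub hPint2 (hgint2.const_mul 2), hftc2,
      intervalIntegral.integral_const_mul]
  constructor
  · calc -2*R*(gg u R) + (∫ r in (0:ℝ)..R, gg u r) - (∫ r in R..(2*R), gg u r)
        = (∫ r in δ..R, (gg u r - PP u r)) + (∫ r in R..η, (PP u r - gg u r)) := by
          rw [hi1, hi3, hB, hC]; ring
      _ ≤ (∫ r in δ..R, Phi u r) + (∫ r in R..η, Phi u r) := add_le_add hlow1 hlow2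
      _ = _ := hsplit.symm
  · calc (∫ r in (0:ℝ)..(2*R), Phi u r)
        = (∫ r in δ..R, Phi u r) + (∫ r in R..η, Phi u r) := hsplit
      _ ≤ (∫ r in δ..R, -PP u r) + (∫ r in R..η, (PP u r - 2*gg u r)) := add_le_add hup1 hup2
      _ = -2*R*(gg u R) - 2*(∫ r in R..(2*R), gg u r) := by rw [hi2, hi4, hC]; ring


/-- for radial approximants `uₙ ∈ S` of `f = h·χ_{B(0,R)}` with
`uₙ'(R) → −∞` and vanishing integrals of `uₙ'/√(1+(uₙ')²)`, the Weingarten energy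
`∫_Ω |W_{uₙ}| = 2π ∫₀^{2R} r·|W| dr` converges to `4πR`. -/
theorem weingarten_energy_limit
    (R h : ℝ) (hR : 0 < R) (hh : 0 < h)
    (φ : ℕ → ℝ → ℝ) (R₁ R₂ : ℕ → ℝ)
    (hclass : ∀ n, ContDiffOn ℝ 2 (φ n) (Set.Icc 0 (2*R)) ∧
      0 < R₁ n ∧ R₁ n < R ∧ R < R₂ n ∧ R₂ n < 2*R ∧
      (∀ r ∈ Set.Icc 0 (R₁ n), φ n r = h) ∧
      (∀ r ∈ Set.Icc (R₂ n) (2*R), φ n r = 0) ∧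
      (∀ r ∈ Set.Ioo 0 R, deriv (deriv (φ n)) r ≤ 0) ∧
      (∀ r ∈ Set.Ioo R (2*R), 0 ≤ deriv (deriv (φ n)) r) ∧
      deriv (φ n) R < -(2*h/R))
    (hpt : ∀ r ∈ Set.Icc (0:ℝ) (2*R),
      Tendsto (fun n => φ n r) atTop (nhds (if r < R then h else 0)))
    (hder : Tendsto (fun n => deriv (φ n) R) atTop atBot)
    (hint1 : Tendsto (fun n => ∫ r in (0:ℝ)..R,
        deriv (φ n) r / Real.sqrt (1 + (deriv (φ n) r)^2)) atTop (nhds 0))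
    (hint2 : Tendsto (fun n => ∫ r in R..(2*R),
        deriv (φ n) r / Real.sqrt (1 + (deriv (φ n) r)^2)) atTop (nhds 0)) :
    Tendsto (fun n => 2 * Real.pi * ∫ r in (0:ℝ)..(2*R),
        r * Real.sqrt ((deriv (deriv (φ n)) r / (1 + (deriv (φ n) r)^2) ^ ((3:ℝ)/2))^2
          + (deriv (φ n) r / (r * Real.sqrt (1 + (deriv (φ n) r)^2)))^2))
      atTop (nhds (4 * Real.pi * R)) := by
  have hA : Tendsto (fun n => deriv (φ n) R / Real.sqrt (1 + (deriv (φ n) R)^2))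
      atTop (nhds (-1)) := tendsto_G_atBot.comp hder
  have hbounds := fun n => key_bounds R hR (φ n) (R₁ n) (R₂ n) h
    (hclass n).1 (hclass n).2.1 (hclass n).2.2.1 (hclass n).2.2.2.1 (hclass n).2.2.2.2.1
    (hclass n).2.2.2.2.2.1 (hclass n).2.2.2.2.2.2.1 (hclass n).2.2.2.2.2.2.2.1
    (hclass n).2.2.2.2.2.2.2.2.1
  have hlo : Tendsto (fun n => 2*Real.pi *
      (-2*R*(deriv (φ n) R / Real.sqrt (1 + (deriv (φ n) R)^2))
        + (∫ r in (0:ℝ)..R, deriv (φ n) r / Real.sqrt (1 + (deriv (φ n) r)^2))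
        - (∫ r in R..(2*R), deriv (φ n) r / Real.sqrt (1 + (deriv (φ n) r)^2))))
      atTop (nhds (4*Real.pi*R)) := by
    have h1 := ((hA.const_mul (-2*R)).add hint1).sub hint2
    have he : (4*Real.pi*R) = 2*Real.pi * (-2*R*(-1) + 0 - 0) := by ring
    rw [he]
    exact h1.const_mul _
  have hhi : Tendsto (fun n => 2*Real.pi *
      (-2*R*(deriv (φ n) R / Real.sqrt (1 + (deriv (φ n) R)^2))
        - 2*(∫ r in R..(2*R), deriv (φ n) r / Real.sqrt (1 + (deriv (φ n) r)^2))))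
      atTop (nhds (4*Real.pi*R)) := by
    have h1 := (hA.const_mul (-2*R)).sub (hint2.const_mul 2)
    have he : (4*Real.pi*R) = 2*Real.pi * (-2*R*(-1) - 2*0) := by ring
    rw [he]
    exact h1.const_mul _
  apply tendsto_of_tendsto_of_tendsto_of_le_of_le hlo hhi
  · intro n
    exact mul_le_mul_of_nonneg_left (hbounds n).1 (by positivity)
  · intro n
    exact mul_le_mul_of_nonneg_left (hbounds n).2 (by positivity)
end
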